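/- Let μ ∈ (1,2), let x₀ ∈ [0,1) and ε > 0 with [x₀ − ε, x₀ + ε] ⊆ [0,1), and let λ denote Lebesgue measure. Let y ∈ [x₀ − ε, x₀ + ε], write γ^{i+1}(y) = b_1⋯b_{i+1}, and suppose {f^i(y') : y' ∈ [x₀ − ε, x₀ + ε], γ^i(y') = γ^i(y)} = T(γ^i(y)). Then λ({x' ∈ [x₀ − ε, x₀ + ε] : γ^{i+1}(x') = b_1⋯b_{i+1}}) · μ · |T(b_1⋯b_i)| = λ({x' ∈ [x₀ − ε, x₀ + ε] : γ^i(x') = b_1⋯b_i}) · |T(b_1⋯b_{i+1})|, where |T(w)| denotes the length of the interval T(w). -/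

import Mathlib

open Set MeasureTheory

/-- The tent map `f(x) = μx` for `x ≤ 1/2` and `μ(1-x)` for `x ≥ 1/2`. -/
noncomputable def tentMap (μ : ℝ) (x : ℝ) : ℝ :=
  if x ≤ 1/2 then μ * x else μ * (1 - x)

/-- `tentBit μ x k` is the `(k+1)`-st bit `b_{k+1}` of the tent code of `x`. -/
noncomputable def tentBit (μ x : ℝ) : ℕ → Bool
  | 0 => if 1/2 ≤ x then true else false
  | k + 1 =>
    if (tentMap μ)^[k+1] x < 1/2 then tentBit μ x k
    else if 1/2 < (tentMap μ)^[k+1] x then !(tentBit μ x k)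
    else true

/-- The tent code `γ^n(x) = b_1 ⋯ b_n`. -/
noncomputable def tentCode (μ : ℝ) (n : ℕ) (x : ℝ) : List Bool :=
  (List.range n).map (tentBit μ x)

/-- The tent language `L_n = {γ^n(x) : x ∈ [0,1)}`. -/
def tentLang (μ : ℝ) (n : ℕ) : Set (List Bool) :=
  {w | ∃ x ∈ Set.Ico (0:ℝ) 1, tentCode μ n x = w}

/-- The segment-type `T(w) = {f^n(x) : x ∈ [0,1), γ^n(x) = w}`. -/
def segType (μ : ℝ) (n : ℕ) (w : List Bool) : Set ℝ :=
  {y | ∃ x ∈ Set.Ico (0:ℝ) 1, tentCode μ n x = w ∧ (tentMap μ)^[n] x = y}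

/-- The set of segment-types `𝒯_n = {T(w) : w ∈ L_n}`. -/
def typeSet (μ : ℝ) (n : ℕ) : Set (Set ℝ) :=
  {S | ∃ w ∈ tentLang μ n, segType μ n w = S}

/-- `I_i = T(γ^i(1/2))`. -/
noncomputable def Iseg (μ : ℝ) (i : ℕ) : Set ℝ :=
  segType μ i (tentCode μ i (1/2))

/-- `Ī_i = T(c̄_i)` where `c̄_i` is the bitwise complement of `γ^i(1/2)`. -/
noncomputable def Isegbar (μ : ℝ) (i : ℕ) : Set ℝ :=
  segType μ i ((tentCode μ i (1/2)).map (fun b => !b))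

/-- The length of the interval `T(w)` (zero if `T(w)` is empty). -/
noncomputable def segLen (μ : ℝ) (n : ℕ) (w : List Bool) : ℝ :=
  (MeasureTheory.volume (segType μ n w)).toReal

/-- uniform "next bit" function -/
noncomputable def nextBit (b : Bool) (z : ℝ) : Bool :=
  if z < 1/2 then b else if 1/2 < z then !b else true

/-- previous bit with convention `false` at stage 0 -/
noncomputable def prevBit (μ y : ℝ) : ℕ → Bool
  | 0 => false
  | k+1 => tentBit μ y k

lemma tentBit_eq_nextBit (μ x : ℝ) (i : ℕ) :
    tentBit μ x i = nextBit (prevBit μ x i) ((tentMap μ)^[i] x) := by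
  cases i with
  | zero =>
    show (if 1/2 ≤ x then true else false) = (if x < 1/2 then false else if 1/2 < x then !false else true)
    rcases lt_trichotomy x (1/2) with h|h|h
    · rw [if_neg (by linarith), if_pos h]
    · rw [if_pos (le_of_eq h.symm), if_neg (by linarith), if_neg (by linarith)]
    · rw [if_pos h.le, if_neg (by linarith), if_pos h]; rfl
  | succ k => rfl

lemma tentCode_length (μ x : ℝ) (n : ℕ) : (tentCode μ n x).length = n := by
  simp [tentCode]

lemma tentCode_succ (μ : ℝ) (n : ℕ) (x : ℝ) :
    tentCode μ (n+1) x = tentCode μ n x ++ [tentBit μ x n] := by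
  simp [tentCode, List.range_succ]

lemma tentCode_succ_iff {μ x y : ℝ} {n : ℕ} :
    tentCode μ (n+1) x = tentCode μ (n+1) y ↔
      tentCode μ n x = tentCode μ n y ∧ tentBit μ x n = tentBit μ y n := by
  rw [tentCode_succ, tentCode_succ]
  constructor
  · intro h
    have := List.append_inj h (by rw [tentCode_length, tentCode_length])
    exact ⟨this.1, by simpa using this.2⟩
  · rintro ⟨h1, h2⟩; rw [h1, h2]

lemma prevBit_eq {μ x y : ℝ} {i : ℕ} (h : tentCode μ i x = tentCode μ i y) :
    prevBit μ x i = prevBit μ y i := by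
  cases i with
  | zero => rfl
  | succ k => exact (tentCode_succ_iff.1 h).2

lemma code_succ_iff (μ x y : ℝ) (i : ℕ) :
    tentCode μ (i+1) x = tentCode μ (i+1) y ↔
      tentCode μ i x = tentCode μ i y ∧
        nextBit (prevBit μ y i) ((tentMap μ)^[i] x)
          = nextBit (prevBit μ y i) ((tentMap μ)^[i] y) := by
  rw [tentCode_succ_iff]
  constructor
  · rintro ⟨h1, h2⟩
    refine ⟨h1, ?_⟩
    calc nextBit (prevBit μ y i) ((tentMap μ)^[i] x)
        = nextBit (prevBit μ x i) ((tentMap μ)^[i] x) := by rw [prevBit_eq h1]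
      _ = tentBit μ x i := (tentBit_eq_nextBit μ x i).symm
      _ = tentBit μ y i := h2
      _ = nextBit (prevBit μ y i) ((tentMap μ)^[i] y) := tentBit_eq_nextBit μ y i
  · rintro ⟨h1, h2⟩
    refine ⟨h1, ?_⟩
    rw [tentBit_eq_nextBit, tentBit_eq_nextBit, prevBit_eq h1, h2]

lemma side_of_code {μ x y : ℝ} {i : ℕ}
    (h : tentCode μ (i+1) x = tentCode μ (i+1) y)
    (hx : (tentMap μ)^[i] x < 1/2) (hy : 1/2 < (tentMap μ)^[i] y) : False := by
  obtain ⟨h1, h2⟩ := (code_succ_iff μ x y i).1 h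
  rw [nextBit, if_pos hx, nextBit, if_neg (by linarith), if_pos hy] at h2
  cases (prevBit μ y i) <;> simp_all

lemma tentMap_eq_left {μ z : ℝ} (hz : z ≤ 1/2) : tentMap μ z = μ * z := if_pos hz

lemma tentMap_eq_right {μ z : ℝ} (hz : 1/2 ≤ z) : tentMap μ z = μ * (1 - z) := by
  unfold tentMap
  split_ifs with h
  · have : z = 1/2 := le_antisymm h hz
    rw [this]; ring
  · rfl

lemma cell_affine (μ : ℝ) (hμ : 0 < μ) (i : ℕ) (w : List Bool) :
    ∃ a c : ℝ, |a| = μ^i ∧ ∀ x, tentCode μ i x = w → (tentMap μ)^[i] x = a * x + c := by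
  induction i generalizing w with
  | zero => exact ⟨1, 0, by simp, fun x _ => by simp⟩
  | succ i ih =>
    by_cases hne : ∃ x, tentCode μ (i+1) x = w
    swap
    · exact ⟨μ^(i+1), 0, abs_of_pos (pow_pos hμ _), fun x hx => absurd ⟨x, hx⟩ hne⟩
    obtain ⟨x0, hx0⟩ := hne
    obtain ⟨a, c, ha, hac⟩ := ih (tentCode μ i x0)
    have hcell : ∀ x, tentCode μ (i+1) x = w → (tentMap μ)^[i] x = a * x + c := by
      intro x hx
      have hxx0 : tentCode μ (i+1) x = tentCode μ (i+1) x0 := hx.trans hx0.symm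
      exact hac x ((code_succ_iff μ x x0 i).1 hxx0).1
    by_cases hside : ∀ x, tentCode μ (i+1) x = w → (tentMap μ)^[i] x ≤ 1/2
    · refine ⟨μ * a, μ * c, ?_, ?_⟩
      · rw [abs_mul, abs_of_pos hμ, ha, pow_succ]; ring
      · intro x hx
        rw [Function.iterate_succ_apply', tentMap_eq_left (hside x hx), hcell x hx]; ring
    · push_neg at hside
      obtain ⟨x1, hx1, hx1'⟩ := hside
      have hge : ∀ x, tentCode μ (i+1) x = w → 1/2 ≤ (tentMap μ)^[i] x := by
        intro x hx
        by_contra hlt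
        push_neg at hlt
        exact side_of_code (hx.trans hx1.symm) hlt hx1'
      refine ⟨-(μ * a), μ * (1 - c), ?_, ?_⟩
      · rw [abs_neg, abs_mul, abs_of_pos hμ, ha, pow_succ]; ring
      · intro x hx
        rw [Function.iterate_succ_apply', tentMap_eq_right (hge x hx), hcell x hx]; ring


lemma vol_image_affine (a c : ℝ) (ha : a ≠ 0) (s : Set ℝ) :
    volume ((fun x => a * x + c) '' s) = ENNReal.ofReal |a| * volume s := by
  have h1 : (fun x : ℝ => a * x + c) '' s
      = (fun x : ℝ => x + c) '' ((fun x : ℝ => a * x) '' s) := by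
    rw [← Set.image_comp]; rfl
  have h2 : (fun x : ℝ => x + c) '' ((fun x : ℝ => a * x) '' s)
      = (fun x : ℝ => (-c) + x) ⁻¹' ((fun x : ℝ => a * x) '' s) := by
    ext z
    simp only [Set.mem_image, Set.mem_preimage]
    constructor
    · rintro ⟨u, hu, rfl⟩
      simpa using hu
    · intro hz
      exact ⟨-c + z, hz, by ring⟩
  have h3 : (fun x : ℝ => a * x) '' s = (fun x : ℝ => a⁻¹ * x) ⁻¹' s := by
    ext z
    simp only [Set.mem_image, Set.mem_preimage]
    constructor
    · rintro ⟨u, hu, rfl⟩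
      rwa [inv_mul_cancel_left₀ ha]
    · intro hz
      exact ⟨a⁻¹ * z, hz, by field_simp⟩
  rw [h1, h2, measure_preimage_add, h3, Real.volume_preimage_mul_left (inv_ne_zero ha), inv_inv]

lemma vol_image_iterate (μ : ℝ) (hμ : 0 < μ) (i : ℕ) (y : ℝ) (s : Set ℝ)
    (hs : ∀ x ∈ s, tentCode μ i x = tentCode μ i y) :
    volume ((tentMap μ)^[i] '' s) = ENNReal.ofReal (μ^i) * volume s := by
  obtain ⟨a, c, ha, hac⟩ := cell_affine μ hμ i (tentCode μ i y)
  have ha0 : a ≠ 0 := by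
    intro h0
    rw [h0, abs_zero] at ha
    exact absurd ha.symm (ne_of_gt (pow_pos hμ i))
  have him : (tentMap μ)^[i] '' s = (fun x => a * x + c) '' s :=
    Set.image_congr (fun x hx => hac x (hs x hx))
  rw [him, vol_image_affine a c ha0 s, ha]

lemma vol_image_tentMap (μ : ℝ) (hμ : 0 < μ) (s : Set ℝ)
    (hs : s ⊆ Set.Iic (1/2) ∨ s ⊆ Set.Ici (1/2)) :
    volume (tentMap μ '' s) = ENNReal.ofReal μ * volume s := by
  rcases hs with h | h
  · have him : tentMap μ '' s = (fun x => μ * x + 0) '' s :=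
      Set.image_congr (fun x hx => by rw [tentMap_eq_left (h hx)]; ring)
    rw [him, vol_image_affine _ _ (ne_of_gt hμ) s, abs_of_pos hμ]
  · have him : tentMap μ '' s = (fun x => (-μ) * x + μ) '' s :=
      Set.image_congr (fun x hx => by rw [tentMap_eq_right (h hx)]; ring)
    rw [him, vol_image_affine _ _ (by intro h0; apply ne_of_gt hμ; linarith [neg_eq_zero.1 h0]) s,
      abs_neg, abs_of_pos hμ]

lemma H_side (c d : Bool) :
    {z : ℝ | nextBit c z = d} ⊆ Set.Iic (1/2) ∨ {z : ℝ | nextBit c z = d} ⊆ Set.Ici (1/2) := by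
  by_cases hcd : c = d
  · left
    intro z hz
    simp only [Set.mem_setOf_eq, nextBit] at hz
    by_contra hle
    simp only [Set.mem_Iic, not_le] at hle
    rw [if_neg (by linarith), if_pos hle, ← hcd] at hz
    cases c <;> simp_all
  · right
    intro z hz
    simp only [Set.mem_setOf_eq, nextBit] at hz
    by_contra hge
    simp only [Set.mem_Ici, not_le] at hge
    rw [if_pos hge] at hz
    exact hcd hz

lemma segType_eq_image (μ : ℝ) (n : ℕ) (w : List Bool) :
    segType μ n w = (tentMap μ)^[n] '' {x ∈ Set.Ico (0:ℝ) 1 | tentCode μ n x = w} := by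
  ext z
  simp only [segType, Set.mem_setOf_eq, Set.mem_image, Set.mem_sep_iff]
  tauto

lemma cell_succ (μ y : ℝ) (i : ℕ) (S : Set ℝ) :
    {x ∈ S | tentCode μ (i+1) x = tentCode μ (i+1) y}
      = {x ∈ S | tentCode μ i x = tentCode μ i y} ∩
        ((tentMap μ)^[i]) ⁻¹'
          {z | nextBit (prevBit μ y i) z = nextBit (prevBit μ y i) ((tentMap μ)^[i] y)} := by
  ext x
  simp only [Set.mem_sep_iff, Set.mem_inter_iff, Set.mem_preimage, Set.mem_setOf_eq,
    code_succ_iff μ x y i]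
  tauto

/-- the conditional transition probability under full covering. -/
theorem tent_trans_prob (μ : ℝ) (hμ1 : 1 < μ) (hμ2 : μ < 2)
    (x₀ ε : ℝ) (hε : 0 < ε)
    (hsub : Set.Icc (x₀ - ε) (x₀ + ε) ⊆ Set.Ico (0:ℝ) 1)
    (y : ℝ) (hy : y ∈ Set.Icc (x₀ - ε) (x₀ + ε)) (i : ℕ)
    (hcov : (tentMap μ)^[i] ''
        {y' ∈ Set.Icc (x₀ - ε) (x₀ + ε) | tentCode μ i y' = tentCode μ i y} =
      segType μ i (tentCode μ i y)) :
    (volume {x' ∈ Set.Icc (x₀ - ε) (x₀ + ε) |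
          tentCode μ (i+1) x' = tentCode μ (i+1) y}).toReal *
        (μ * segLen μ i (tentCode μ i y)) =
      (volume {x' ∈ Set.Icc (x₀ - ε) (x₀ + ε) |
          tentCode μ i x' = tentCode μ i y}).toReal *
        segLen μ (i+1) (tentCode μ (i+1) y) := by
  have hμ0 : (0:ℝ) < μ := lt_trans one_pos hμ1
  set I := Set.Icc (x₀ - ε) (x₀ + ε) with hI
  set c := prevBit μ y i with hc
  set d := nextBit c ((tentMap μ)^[i] y) with hd
  set H : Set ℝ := {z | nextBit c z = d} with hHdef
  set E0 := {x' ∈ I | tentCode μ i x' = tentCode μ i y} with hE0def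
  set E1 := {x' ∈ I | tentCode μ (i+1) x' = tentCode μ (i+1) y} with hE1def
  have hE1 : E1 = E0 ∩ ((tentMap μ)^[i]) ⁻¹' H := cell_succ μ y i I
  have hsE0 : ∀ x ∈ E0, tentCode μ i x = tentCode μ i y := fun x hx => hx.2
  have hsE1 : ∀ x ∈ E1, tentCode μ i x = tentCode μ i y :=
    fun x hx => ((code_succ_iff μ x y i).1 hx.2).1
  have v0 : volume (segType μ i (tentCode μ i y)) = ENNReal.ofReal (μ^i) * volume E0 := by
    rw [← hcov]
    exact vol_image_iterate μ hμ0 i y E0 hsE0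
  have him1 : (tentMap μ)^[i] '' E1 = segType μ i (tentCode μ i y) ∩ H := by
    rw [hE1, Set.image_inter_preimage, hcov]
  have v1 : volume (segType μ i (tentCode μ i y) ∩ H) = ENNReal.ofReal (μ^i) * volume E1 := by
    rw [← him1]
    exact vol_image_iterate μ hμ0 i y E1 hsE1
  have hseg1 : segType μ (i+1) (tentCode μ (i+1) y)
      = tentMap μ '' (segType μ i (tentCode μ i y) ∩ H) := by
    rw [segType_eq_image μ (i+1), cell_succ μ y i (Set.Ico 0 1), Function.iterate_succ',
        Set.image_comp, Set.image_inter_preimage, ← segType_eq_image]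
  have v2 : volume (segType μ (i+1) (tentCode μ (i+1) y))
      = ENNReal.ofReal μ * volume (segType μ i (tentCode μ i y) ∩ H) := by
    rw [hseg1]
    refine vol_image_tentMap μ hμ0 _ ?_
    rcases H_side c d with h | h
    · exact Or.inl (Set.inter_subset_right.trans h)
    · exact Or.inr (Set.inter_subset_right.trans h)
  unfold segLen
  rw [v2, v1, v0, ENNReal.toReal_mul, ENNReal.toReal_mul, ENNReal.toReal_mul,
      ENNReal.toReal_ofReal (le_of_lt hμ0), ENNReal.toReal_ofReal (pow_nonneg (le_of_lt hμ0) i)]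
  ring
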